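/- For every integer r ≥ 1, the multiple t-value at identical argument 2 satisfies t_r(2) = ∑_{n₁ > n₂ > ⋯ > n_r > 0} ((2n₁−1)(2n₂−1)⋯(2n_r−1))^{-2} = π^{2r} / (2^{2r}·(2r)!). -/

import Mathlib

open Filter Finset Real

namespace MTaux

noncomputable section

/-- The summand `1/(2n-1)^2`. -/
def A (n : ℕ+) : ℝ := (((2 * (n : ℕ) - 1 : ℕ) : ℝ) ^ 2)⁻¹

lemma A_nonneg (n : ℕ+) : 0 ≤ A n := by unfold A; positivity

lemma A_succPNat (j : ℕ) : A j.succPNat = (((2 * (j : ℝ) + 1)) ^ 2)⁻¹ := by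
  unfold A
  have h : (2 * (j.succPNat : ℕ) - 1 : ℕ) = 2 * j + 1 := by
    rw [Nat.succPNat_coe]; omega
  rw [h]; push_cast; ring_nf

lemma summable_A : Summable A := by
  have hs : Summable (fun k : ℕ => (((2 * k - 1 : ℕ) : ℝ) ^ 2)⁻¹) := by
    have hsum : Summable (fun k : ℕ => ((k : ℝ) ^ 2)⁻¹) := by
      simpa [one_div] using (summable_one_div_nat_pow (p := 2)).2 one_lt_two
    refine Summable.of_nonneg_of_le (fun k => by positivity) (fun k => ?_) hsum
    rcases Nat.eq_zero_or_pos k with h | h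
    · subst h; simp
    · have h1 : (k : ℝ) ≤ ((2 * k - 1 : ℕ) : ℝ) := by
        have : k ≤ 2 * k - 1 := by omega
        exact_mod_cast this
      have h2 : (0 : ℝ) < (k : ℝ) := by exact_mod_cast h
      apply inv_anti₀ (by positivity)
      nlinarith
  have hinj : Function.Injective (fun n : ℕ+ => (n : ℕ)) := fun a b h => PNat.coe_injective h
  refine (Function.Injective.summable_iff hinj ?_).2 hs
  intro k hk
  have hk0 : k = 0 := by
    by_contra h
    exact hk ⟨⟨k, Nat.pos_of_ne_zero h⟩, rfl⟩
  subst hk0; simp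

/-- The multiple `t`-value sum. -/
def S (r : ℕ) : ℝ := ∑' f : {f : Fin r → ℕ+ // StrictAnti f}, ∏ i, A (f.1 i)

lemma S_nonneg (r : ℕ) : 0 ≤ S r :=
  tsum_nonneg fun f => Finset.prod_nonneg fun i _ => A_nonneg _

lemma S_zero : S 0 = 1 := by
  unfold S
  have x0 : {f : Fin 0 → ℕ+ // StrictAnti f} :=
    ⟨fun i => i.elim0, fun a _ _ => a.elim0⟩
  have hu : ∀ f : {f : Fin 0 → ℕ+ // StrictAnti f}, f = x0 := by
    intro f; apply Subtype.ext; funext i; exact i.elim0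
  rw [tsum_eq_single x0 (fun f hf => absurd (hu f) hf)]
  simp

end


noncomputable section

/-- Master summand over finsets. -/
def gg (y : ℝ) (t : Finset ℕ+) : ℝ := y ^ t.card * ∏ n ∈ t, A n

lemma gg_nonneg {y : ℝ} (hy : 0 ≤ y) (t : Finset ℕ+) : 0 ≤ gg y t := by
  unfold gg
  exact mul_nonneg (pow_nonneg hy _) (Finset.prod_nonneg fun n _ => A_nonneg n)

lemma abs_gg (y : ℝ) (t : Finset ℕ+) : |gg y t| = gg |y| t := by
  unfold gg
  rw [abs_mul, abs_pow, abs_of_nonneg (Finset.prod_nonneg fun n _ => A_nonneg n)]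

/-- Strictly decreasing `r`-tuples correspond to `r`-element finsets. -/
def antiEquiv (r : ℕ) : {f : Fin r → ℕ+ // StrictAnti f} ≃ {t : Finset ℕ+ // t.card = r} where
  toFun f := ⟨Finset.image f.1 Finset.univ, by
    rw [Finset.card_image_of_injective _ f.2.injective, Finset.card_univ, Fintype.card_fin]⟩
  invFun t := ⟨fun i => (t.1.orderEmbOfFin t.2) i.rev, by
    intro i j hij
    exact (t.1.orderEmbOfFin t.2).strictMono (by simpa using (Fin.rev_lt_rev).2 hij)⟩
  left_inv f := by
    apply Subtype.ext
    have hmono : StrictMono (f.1 ∘ Fin.rev) := by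
      intro i j hij
      exact f.2 ((Fin.rev_lt_rev).2 hij)
    have hfs : ∀ x : Fin r, (f.1 ∘ Fin.rev) x ∈ Finset.image f.1 Finset.univ := fun x =>
      Finset.mem_image_of_mem _ (Finset.mem_univ _)
    have h := Finset.orderEmbOfFin_unique
      (by rw [Finset.card_image_of_injective _ f.2.injective, Finset.card_univ,
          Fintype.card_fin] : (Finset.image f.1 Finset.univ).card = r) hfs hmono
    funext i
    have := congrFun h.symm i.rev
    simpa [Fin.rev_rev] using this
  right_inv t := by
    apply Subtype.ext
    show Finset.image (fun i : Fin r => (t.1.orderEmbOfFin t.2) i.rev) Finset.univ = t.1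
    apply Finset.coe_injective
    rw [Finset.coe_image, Finset.coe_univ, Set.image_univ]
    have h : (fun i : Fin r => (t.1.orderEmbOfFin t.2) i.rev)
        = (t.1.orderEmbOfFin t.2) ∘ Fin.rev := rfl
    rw [h, Fin.rev_involutive.surjective.range_comp, Finset.range_orderEmbOfFin]

lemma tsum_fiber (y : ℝ) (r : ℕ) :
    ∑' c : {t : Finset ℕ+ // t.card = r}, gg y c.1 = y ^ r * S r := by
  have h1 : ∀ c : {t : Finset ℕ+ // t.card = r},
      gg y c.1 = y ^ r * ∏ n ∈ c.1, A n := by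
    intro c; unfold gg; rw [c.2]
  rw [tsum_congr h1, tsum_mul_left]
  congr 1
  rw [S, ← (antiEquiv r).tsum_eq (fun c => ∏ n ∈ c.1, A n)]
  refine tsum_congr fun f => ?_
  show ∏ n ∈ Finset.image f.1 Finset.univ, A n = ∏ i, A (f.1 i)
  exact Finset.prod_image (fun i _ j _ h => f.2.injective h)

/-- Finite product expansion. -/
lemma prod_one_add (y : ℝ) (u : Finset ℕ+) :
    ∏ n ∈ u, (1 + y * A n) = ∑ t ∈ u.powerset, gg y t := by
  classical
  have h : ∀ n ∈ u, (1 + y * A n) = (y * A n + 1) := fun n _ => by ring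
  rw [Finset.prod_congr rfl h, Finset.prod_add]
  refine Finset.sum_congr rfl fun t _ => ?_
  rw [Finset.prod_const_one, mul_one]
  unfold gg
  rw [Finset.prod_mul_distrib, Finset.prod_const]

/-- The first `N` positive naturals as a finset of `ℕ+`. -/
def sN (N : ℕ) : Finset ℕ+ := (Finset.range N).map ⟨Nat.succPNat, Nat.succPNat_injective⟩

lemma mem_sN {m : ℕ+} {N : ℕ} (h : (m : ℕ) ≤ N) : m ∈ sN N := by
  refine Finset.mem_map.2 ⟨m.natPred, Finset.mem_range.2 ?_, ?_⟩
  · have := PNat.natPred_add_one m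
    have hm := m.pos
    omega
  · exact PNat.succPNat_natPred m

lemma sN_mono : Monotone sN := fun a b hab =>
  Finset.map_subset_map.2 (Finset.range_subset_range.2 hab)

/-- The total sum `∑ 1/(2n-1)^2`. -/
def TA : ℝ := ∑' n : ℕ+, A n

lemma summable_gg_nonneg {y : ℝ} (hy : 0 ≤ y) : Summable (gg y) := by
  apply summable_of_sum_le (c := Real.exp (y * TA)) (fun t => gg_nonneg hy t)
  intro u
  set N := 1 + u.sup (fun t => t.sup (fun m => (m : ℕ))) with hN
  have hsub : u ⊆ (sN N).powerset := by
    intro t ht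
    rw [Finset.mem_powerset]
    intro m hm
    apply mem_sN
    have h1 : (m : ℕ) ≤ t.sup (fun m => (m : ℕ)) := Finset.le_sup hm
    have h2 : t.sup (fun m => (m : ℕ)) ≤ u.sup (fun t => t.sup (fun m => (m : ℕ))) :=
      Finset.le_sup ht
    omega
  calc ∑ t ∈ u, gg y t ≤ ∑ t ∈ (sN N).powerset, gg y t :=
        Finset.sum_le_sum_of_subset_of_nonneg hsub (fun t _ _ => gg_nonneg hy t)
    _ = ∏ m ∈ sN N, (1 + y * A m) := (prod_one_add y _).symm
    _ ≤ ∏ m ∈ sN N, Real.exp (y * A m) := by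
        refine Finset.prod_le_prod (fun m _ => ?_) (fun m _ => ?_)
        · have := mul_nonneg hy (A_nonneg m)
          linarith
        · have := Real.add_one_le_exp (y * A m)
          linarith
    _ = Real.exp (∑ m ∈ sN N, y * A m) := (Real.exp_sum _ _).symm
    _ ≤ Real.exp (y * TA) := by
        apply Real.exp_le_exp.2
        rw [← Finset.mul_sum]
        exact mul_le_mul_of_nonneg_left
          (Summable.sum_le_tsum _ (fun n _ => A_nonneg n) summable_A) hy

lemma summable_gg (y : ℝ) : Summable (gg y) := by
  rw [← summable_abs_iff]
  have h : (fun t => |gg y t|) = gg |y| := funext (abs_gg y)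
  rw [h]
  exact summable_gg_nonneg (abs_nonneg y)

/-- The fibering equivalence by cardinality. -/
def fe : (Σ r : ℕ, {t : Finset ℕ+ // t.card = r}) ≃ Finset ℕ+ :=
  Equiv.sigmaFiberEquiv (Finset.card : Finset ℕ+ → ℕ)

set_option maxHeartbeats 1000000 in
lemma tsum_gg (y : ℝ) : ∑' t : Finset ℕ+, gg y t = ∑' r : ℕ, y ^ r * S r := by
  have h0 : Summable (gg y ∘ fe) := (Equiv.summable_iff fe).2 (summable_gg y)
  calc ∑' t : Finset ℕ+, gg y t
      = ∑' c : (Σ r : ℕ, {t : Finset ℕ+ // t.card = r}), (gg y ∘ fe) c :=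
        (Equiv.tsum_eq fe (gg y)).symm
    _ = ∑' (r : ℕ) (c : {t : Finset ℕ+ // t.card = r}), (gg y ∘ fe) ⟨r, c⟩ := Summable.tsum_sigma h0
    _ = ∑' r : ℕ, y ^ r * S r := tsum_congr fun r => tsum_fiber y r

set_option maxHeartbeats 1000000 in
lemma summable_pow_S (y : ℝ) : Summable (fun r : ℕ => y ^ r * S r) := by
  have h0 : Summable (gg y ∘ fe) := (Equiv.summable_iff fe).2 (summable_gg y)
  refine h0.sigma.congr fun r => ?_
  exact tsum_fiber y r

end


noncomputable section

lemma prod_range_two_mul (N : ℕ) (h : ℕ → ℝ) :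
    ∏ j ∈ Finset.range (2 * N), h j
      = (∏ k ∈ Finset.range N, h (2 * k)) * ∏ k ∈ Finset.range N, h (2 * k + 1) := by
  induction N with
  | zero => simp
  | succ n ih =>
      have h2 : 2 * (n + 1) = (2 * n + 1) + 1 := by ring
      rw [h2, Finset.prod_range_succ, Finset.prod_range_succ, Finset.prod_range_succ,
        Finset.prod_range_succ, ih]
      ring

/-- Partial products of the cosine Euler product. -/
lemma tendsto_cos_prod {x : ℝ} (h0 : 0 < x) (h1 : x < 1) :
    Filter.Tendsto (fun N => ∏ j ∈ Finset.range N, (1 - x ^ 2 / (2 * (j : ℝ) + 1) ^ 2))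
      Filter.atTop (nhds (Real.cos (π * x / 2))) := by
  have hpi := Real.pi_pos
  have hx : π * x ≠ 0 := by positivity
  have hx2 : π * (x / 2) ≠ 0 := by positivity
  have hsin2 : Real.sin (π * (x / 2)) ≠ 0 := by
    refine ne_of_gt (Real.sin_pos_of_pos_of_lt_pi (by positivity) ?_)
    nlinarith
  set u : ℕ → ℝ := fun n => ∏ j ∈ Finset.range n, (1 - x ^ 2 / ((j : ℝ) + 1) ^ 2) with hu_def
  set v : ℕ → ℝ := fun n => ∏ j ∈ Finset.range n, (1 - (x / 2) ^ 2 / ((j : ℝ) + 1) ^ 2)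
    with hv_def
  have hu : Filter.Tendsto u Filter.atTop (nhds (Real.sin (π * x) / (π * x))) := by
    have h := (Real.tendsto_euler_sin_prod x).div_const (π * x)
    refine h.congr fun n => ?_
    rw [mul_comm, mul_div_assoc, div_self hx, mul_one]
  have hv : Filter.Tendsto v Filter.atTop (nhds (Real.sin (π * (x / 2)) / (π * (x / 2)))) := by
    have h := (Real.tendsto_euler_sin_prod (x / 2)).div_const (π * (x / 2))
    refine h.congr fun n => ?_
    rw [mul_comm, mul_div_assoc, div_self hx2, mul_one]
  have hvpos : ∀ n, 0 < v n := by
    intro n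
    refine Finset.prod_pos fun j _ => ?_
    have hj : (1 : ℝ) ≤ ((j : ℝ) + 1) ^ 2 := by nlinarith [Nat.cast_nonneg (α := ℝ) j]
    have hxlt : (x / 2) ^ 2 < 1 := by nlinarith
    have : (x / 2) ^ 2 / ((j : ℝ) + 1) ^ 2 < 1 := by
      rw [div_lt_one (by positivity)]
      nlinarith
    linarith
  have hu2 : Filter.Tendsto (fun N => u (2 * N)) Filter.atTop
      (nhds (Real.sin (π * x) / (π * x))) :=
    hu.comp (Filter.tendsto_atTop_atTop.2 fun b => ⟨b, fun a ha => by omega⟩)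
  have hVne : Real.sin (π * (x / 2)) / (π * (x / 2)) ≠ 0 := div_ne_zero hsin2 hx2
  have hdiv := hu2.div hv hVne
  have hPeq : ∀ N, u (2 * N) / v N
      = ∏ j ∈ Finset.range N, (1 - x ^ 2 / (2 * (j : ℝ) + 1) ^ 2) := by
    intro N
    have hsplit := prod_range_two_mul N (fun j => 1 - x ^ 2 / ((j : ℝ) + 1) ^ 2)
    have he : ∀ k ∈ Finset.range N,
        (1 - x ^ 2 / (((2 * k : ℕ) : ℝ) + 1) ^ 2) = 1 - x ^ 2 / (2 * (k : ℝ) + 1) ^ 2 := by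
      intro k _; push_cast; ring_nf
    have ho : ∀ k ∈ Finset.range N,
        (1 - x ^ 2 / (((2 * k + 1 : ℕ) : ℝ) + 1) ^ 2)
          = 1 - (x / 2) ^ 2 / ((k : ℝ) + 1) ^ 2 := by
      intro k _
      have hk : ((k : ℝ) + 1) ≠ 0 := by positivity
      push_cast
      field_simp
      ring
    have : u (2 * N)
        = (∏ j ∈ Finset.range N, (1 - x ^ 2 / (2 * (j : ℝ) + 1) ^ 2)) * v N := by
      rw [hu_def]
      show (∏ j ∈ Finset.range (2 * N), (1 - x ^ 2 / ((j : ℝ) + 1) ^ 2)) = _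
      rw [hsplit, Finset.prod_congr rfl he, Finset.prod_congr rfl ho]
    rw [this, mul_div_assoc, div_self (ne_of_gt (hvpos N)), mul_one]
  have hlim : Real.sin (π * x) / (π * x) / (Real.sin (π * (x / 2)) / (π * (x / 2)))
      = Real.cos (π * x / 2) := by
    have hs2 : Real.sin (π * x) = 2 * Real.sin (π * x / 2) * Real.cos (π * x / 2) := by
      rw [← Real.sin_two_mul]
      ring_nf
    have he : π * (x / 2) = π * x / 2 := by ring
    rw [he] at hsin2 hx2 ⊢
    rw [hs2]
    field_simp
  rw [hlim] at hdiv
  exact hdiv.congr hPeq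

/-- The key limit identity. -/
lemma tsum_gg_eq_cos {x : ℝ} (h0 : 0 < x) (h1 : x < 1) :
    (∑' t : Finset ℕ+, gg (-(x ^ 2)) t) = Real.cos (π * x / 2) := by
  have hsum : Summable (gg (-(x ^ 2))) := summable_gg _
  have hF : Filter.Tendsto (fun N => ((sN N).powerset : Finset (Finset ℕ+)))
      Filter.atTop Filter.atTop := by
    apply tendsto_atTop_finset_of_monotone
    · exact fun a b hab => Finset.powerset_mono.2 (sN_mono hab)
    · intro t
      refine ⟨1 + t.sup (fun m => (m : ℕ)), Finset.mem_powerset.2 fun m hm => ?_⟩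
      apply mem_sN
      have h : (m : ℕ) ≤ t.sup (fun m => (m : ℕ)) := Finset.le_sup hm
      omega
  have T1 : Filter.Tendsto (fun N => ∑ t ∈ (sN N).powerset, gg (-(x ^ 2)) t)
      Filter.atTop (nhds (∑' t : Finset ℕ+, gg (-(x ^ 2)) t)) :=
    hsum.hasSum.comp hF
  have T2 : ∀ N, ∑ t ∈ (sN N).powerset, gg (-(x ^ 2)) t
      = ∏ j ∈ Finset.range N, (1 - x ^ 2 / (2 * (j : ℝ) + 1) ^ 2) := by
    intro N
    rw [← prod_one_add]
    rw [sN, Finset.prod_map]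
    refine Finset.prod_congr rfl fun j _ => ?_
    show 1 + -x ^ 2 * A (Nat.succPNat j) = _
    rw [A_succPNat]
    have hj : (2 * (j : ℝ) + 1) ≠ 0 := by positivity
    field_simp
    ring
  have T1' : Filter.Tendsto (fun N => ∏ j ∈ Finset.range N, (1 - x ^ 2 / (2 * (j : ℝ) + 1) ^ 2))
      Filter.atTop (nhds (∑' t : Finset ℕ+, gg (-(x ^ 2)) t)) := T1.congr T2
  exact tendsto_nhds_unique T1' (tendsto_cos_prod h0 h1)

end


noncomputable section

/-- Coefficients of the product power series. -/
def cseq (k : ℕ) : ℝ := if Even k then (-1 : ℝ) ^ (k / 2) * S (k / 2) else 0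

/-- Coefficients of `cos (π x / 2)`. -/
def dseq (k : ℕ) : ℝ :=
  if Even k then (-1 : ℝ) ^ (k / 2) * (π / 2) ^ k / (k.factorial : ℝ) else 0

lemma cseq_two_mul (r : ℕ) : cseq (2 * r) = (-1 : ℝ) ^ r * S r := by
  have h : 2 * r / 2 = r := by omega
  rw [cseq, if_pos (even_two_mul r), h]

lemma dseq_two_mul (r : ℕ) :
    dseq (2 * r) = (-1 : ℝ) ^ r * (π / 2) ^ (2 * r) / ((2 * r).factorial : ℝ) := by
  have h : 2 * r / 2 = r := by omega
  rw [dseq, if_pos (even_two_mul r), h]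

lemma cseq_odd (k : ℕ) (h : ¬ Even k) : cseq k = 0 := if_neg h

lemma dseq_odd (k : ℕ) (h : ¬ Even k) : dseq k = 0 := if_neg h

/-- The two formal power series. -/
def pS : FormalMultilinearSeries ℝ ℝ ℝ := FormalMultilinearSeries.ofScalars ℝ cseq

def qS : FormalMultilinearSeries ℝ ℝ ℝ := FormalMultilinearSeries.ofScalars ℝ dseq

lemma pS_norm (k : ℕ) : ‖pS k‖ = |cseq k| := by
  simpa [pS, FormalMultilinearSeries.coeff_ofScalars] using FormalMultilinearSeries.ofScalars_norm (𝕜 := ℝ) ℝ cseq k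

lemma qS_norm (k : ℕ) : ‖qS k‖ = |dseq k| := by
  simpa [qS, FormalMultilinearSeries.coeff_ofScalars] using FormalMultilinearSeries.ofScalars_norm (𝕜 := ℝ) ℝ dseq k

lemma tsum_even (F : ℕ → ℝ) (hF : ∀ k, ¬ Even k → F k = 0) :
    ∑' r : ℕ, F (2 * r) = ∑' k : ℕ, F k := by
  refine Function.Injective.tsum_eq (g := fun r : ℕ => 2 * r)
    (fun a b (h : 2 * a = 2 * b) => by omega) ?_
  intro k hk
  rcases Nat.even_or_odd k with he | ho
  · obtain ⟨m, hm⟩ := he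
    exact ⟨m, by show 2 * m = k; omega⟩
  · exact absurd (hF k (Nat.not_even_iff_odd.2 ho)) hk

lemma pS_radius_pos : 0 < pS.radius := by
  have hbase : Summable (fun r : ℕ => ((1 / 2 : ℝ) ^ 2) ^ r * S r) := summable_pow_S _
  have h2 : Summable (fun r : ℕ => ‖pS (2 * r)‖ * (1 / 2 : ℝ) ^ (2 * r)) := by
    refine Summable.congr hbase fun r => ?_
    rw [pS_norm, cseq_two_mul, abs_mul, abs_pow, abs_neg, abs_one, one_pow, one_mul,
      abs_of_nonneg (S_nonneg r), pow_mul]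
    ring
  have hs : Summable (fun k : ℕ => ‖pS k‖ * (1 / 2 : ℝ) ^ k) := by
    refine (Function.Injective.summable_iff (g := fun r : ℕ => 2 * r)
      (fun a b (h : 2 * a = 2 * b) => by omega) ?_).1 h2
    intro k hk
    have hodd : ¬ Even k := by
      rintro ⟨m, hm⟩; exact hk ⟨m, by show 2 * m = k; omega⟩
    rw [pS_norm, cseq_odd k hodd]
    simp
  have hle := pS.le_radius_of_summable_norm (r := (1 / 2 : NNReal)) (by
    have hco : ((1 / 2 : NNReal) : ℝ) = (1 / 2 : ℝ) := by norm_num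
    simpa [hco] using hs)
  refine lt_of_lt_of_le ?_ hle
  simp

lemma qS_radius_pos : 0 < qS.radius := by
  have hs : Summable (fun k : ℕ => ‖qS k‖ * (1 : ℝ) ^ k) := by
    simp only [one_pow, mul_one]
    refine Summable.of_nonneg_of_le (fun k => norm_nonneg _) (fun k => ?_)
      (Real.summable_pow_div_factorial (π / 2))
    rw [qS_norm]
    unfold dseq
    split
    · rw [abs_div, abs_mul, abs_pow, abs_pow, abs_neg, abs_one, one_pow, one_mul,
        abs_of_nonneg (by positivity : (0:ℝ) ≤ π / 2), abs_of_nonneg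
          (by positivity : (0:ℝ) ≤ ((Nat.factorial _ : ℕ) : ℝ))]
    · have : (0:ℝ) ≤ (π / 2) ^ k / (k.factorial : ℝ) := by positivity
      simpa using this
  have hle := qS.le_radius_of_summable_norm (r := (1 : NNReal)) (by
    simpa using hs)
  refine lt_of_lt_of_le ?_ hle
  simp

lemma pS_sum (x : ℝ) : pS.sum x = ∑' r : ℕ, (-(x ^ 2)) ^ r * S r := by
  have h1 : pS.sum x = ∑' k : ℕ, cseq k * x ^ k := by
    show (∑' n : ℕ, pS n fun _ => x) = _
    refine tsum_congr fun k => ?_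
    have h := FormalMultilinearSeries.ofScalars_apply_eq (E := ℝ) (𝕜 := ℝ) cseq x k
    simpa [smul_eq_mul, pS, FormalMultilinearSeries.coeff_ofScalars] using h
  rw [h1, ← tsum_even (fun k => cseq k * x ^ k)
    (fun k hk => by show cseq k * x ^ k = 0; rw [cseq_odd k hk, zero_mul])]
  refine tsum_congr fun r => ?_
  rw [cseq_two_mul, neg_pow, pow_mul]
  ring

lemma qS_sum (x : ℝ) : qS.sum x = Real.cos (π * x / 2) := by
  have h1 : qS.sum x = ∑' k : ℕ, dseq k * x ^ k := by
    show (∑' n : ℕ, qS n fun _ => x) = _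
    refine tsum_congr fun k => ?_
    have h := FormalMultilinearSeries.ofScalars_apply_eq (E := ℝ) (𝕜 := ℝ) dseq x k
    simpa [smul_eq_mul, qS, FormalMultilinearSeries.coeff_ofScalars] using h
  rw [h1, ← tsum_even (fun k => dseq k * x ^ k)
    (fun k hk => by show dseq k * x ^ k = 0; rw [dseq_odd k hk, zero_mul])]
  rw [← (Real.hasSum_cos (π * x / 2)).tsum_eq]
  refine tsum_congr fun r => ?_
  rw [dseq_two_mul]
  have hxx : (π * x / 2) ^ (2 * r) = (π / 2) ^ (2 * r) * x ^ (2 * r) := by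
    rw [show π * x / 2 = (π / 2) * x by ring, mul_pow]
  rw [hxx]
  ring

lemma sum_eq_cos_all {x : ℝ} (h0 : 0 < x) (h1 : x < 1) :
    ∑' r : ℕ, (-(x ^ 2)) ^ r * S r = Real.cos (π * x / 2) := by
  rw [← tsum_gg (-(x ^ 2))]
  exact tsum_gg_eq_cos h0 h1

lemma pS_eventually : pS.sum =ᶠ[nhds (0 : ℝ)] qS.sum := by
  have hball : Metric.ball (0 : ℝ) 1 ∈ nhds (0 : ℝ) := Metric.ball_mem_nhds _ one_pos
  filter_upwards [hball] with x hx
  rw [Metric.mem_ball, dist_zero_right, Real.norm_eq_abs] at hx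
  obtain ⟨hx1, hx2⟩ := abs_lt.1 hx
  rw [pS_sum, qS_sum]
  rcases lt_trichotomy x 0 with h | h | h
  · have h0 : 0 < -x := by linarith
    have h1 : -x < 1 := by linarith
    have hh := sum_eq_cos_all h0 h1
    rw [neg_sq, show π * -x / 2 = -(π * x / 2) by ring, Real.cos_neg] at hh
    exact hh
  · subst h
    have hz : ∀ r : ℕ, r ≠ 0 → (-((0 : ℝ) ^ 2)) ^ r * S r = 0 := by
      intro r hr
      simp [zero_pow hr]
    rw [tsum_eq_single 0 hz]
    simp [S_zero]
  · exact sum_eq_cos_all h hx2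

end

end MTaux

open MTaux in
/-- For every `r ≥ 1`:
`t_r(2) = ∑_{n₁ > ⋯ > n_r > 0} ((2n₁−1)⋯(2n_r−1))^{-2} = π^{2r}/(2^{2r}·(2r)!)`. -/
theorem multT_at_two (r : ℕ) (hr : 1 ≤ r) :
    (∑' f : {f : Fin r → ℕ+ // StrictAnti f},
        ∏ i, (((2 * (f.1 i : ℕ) - 1 : ℕ) : ℝ) ^ 2)⁻¹)
      = Real.pi ^ (2 * r) / (2 ^ (2 * r) * ((2 * r).factorial : ℝ)) := by
  have hp : HasFPowerSeriesAt pS.sum pS 0 :=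
    (pS.hasFPowerSeriesOnBall pS_radius_pos).hasFPowerSeriesAt
  have hq : HasFPowerSeriesAt qS.sum qS 0 :=
    (qS.hasFPowerSeriesOnBall qS_radius_pos).hasFPowerSeriesAt
  have hpq : pS = qS := (hp.congr pS_eventually).eq_formalMultilinearSeries hq
  have hcd : cseq = dseq := FormalMultilinearSeries.ofScalars_series_injective ℝ ℝ hpq
  have h2r := congrFun hcd (2 * r)
  rw [cseq_two_mul, dseq_two_mul, mul_div_assoc] at h2r
  have hne : ((-1 : ℝ) ^ r) ≠ 0 := pow_ne_zero _ (by norm_num)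
  have hS : S r = (Real.pi / 2) ^ (2 * r) / (((2 * r).factorial : ℕ) : ℝ) :=
    mul_left_cancel₀ hne h2r
  show S r = _
  rw [hS, div_pow, div_div]
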